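/- arXiv:2602.22939 — 5 statements merged into one kernel-verified Lean document; each statement's English description precedes it below -/
import Mathlib

section
/- Let A, U† be n×n real matrices, B an n×m real matrix, and Σ_ref a symmetric positive definite n×n real matrix. Suppose Σ : ℝ^{n×n} → ℝ^{n×n} is Fréchet differentiable at U† and satisfies (A+U) Σ(U) (A+U)ᵀ − Σ(U) + BBᵀ = 0 for all U in a neighborhood of U†, that Σ† := Σ(U†) is symmetric positive definite, and that Λ† is a symmetric n×n matrix satisfying the adjoint Lyapunov equation (A+U†)ᵀ Λ† (A+U†) − Λ† + (1/2)(Σ_ref⁻¹ − (Σ†)⁻¹) = 0. Define J(U) = (1/2)( tr(Σ_ref⁻¹ Σ(U)) − n + log det Σ_ref − log det Σ(U) ). Then J is differentiable at U† and its Fréchet derivative at U† applied to a direction H ∈ ℝ^{n×n} equals tr( (2 Λ† (A+U†) Σ†)ᵀ H ); i.e., the gradient of J with respect to U at U† is 2 Λ† (A+U†) Σ†. -/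
open Matrix Filter

attribute [local instance] Matrix.normedAddCommGroup Matrix.normedSpace


noncomputable def detCM (n : ℕ) :
    ContinuousMultilinearMap ℝ (fun _ : Fin n => (Fin n → ℝ)) ℝ :=
  MultilinearMap.mkContinuous
    (Matrix.detRowAlternating : (Fin n → ℝ) [⋀^Fin n]→ₗ[ℝ] ℝ).toMultilinearMap
    (Nat.factorial n) (by
      intro m
      have h1 : (Matrix.detRowAlternating : (Fin n → ℝ) [⋀^Fin n]→ₗ[ℝ] ℝ).toMultilinearMap m
          = Matrix.det (Matrix.of m) := rfl
      rw [h1, Matrix.det_apply]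
      refine (norm_sum_le _ _).trans ?_
      have hterm : ∀ σ : Equiv.Perm (Fin n),
          ‖Equiv.Perm.sign σ • ∏ i, Matrix.of m (σ i) i‖ ≤ ∏ i, ‖m i‖ := by
        intro σ
        have h2 : ‖Equiv.Perm.sign σ • ∏ i, Matrix.of m (σ i) i‖
            = ‖∏ i, Matrix.of m (σ i) i‖ := by
          rcases Int.units_eq_one_or (Equiv.Perm.sign σ) with h | h <;> simp [h]
        rw [h2]
        calc ‖∏ i, Matrix.of m (σ i) i‖ ≤ ∏ i, ‖m (σ i)‖ := by
              rw [norm_prod]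
              exact Finset.prod_le_prod (fun i _ => norm_nonneg _)
                (fun i _ => norm_le_pi_norm (m (σ i)) i)
          _ = ∏ i, ‖m i‖ := Equiv.prod_comp σ (fun i => ‖m i‖)
      calc ∑ σ : Equiv.Perm (Fin n), ‖Equiv.Perm.sign σ • ∏ i, Matrix.of m (σ i) i‖
          ≤ ∑ _σ : Equiv.Perm (Fin n), ∏ i, ‖m i‖ :=
            Finset.sum_le_sum fun σ _ => hterm σ
        _ = (Nat.factorial n) * ∏ i, ‖m i‖ := by
            simp [Finset.sum_const, Fintype.card_perm])

lemma detCM_apply {n : ℕ} (M : Matrix (Fin n) (Fin n) ℝ) : detCM n M = M.det := rfl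

lemma hasFDerivAt_det {n : ℕ} (X : Matrix (Fin n) (Fin n) ℝ) :
    HasFDerivAt (fun M : Matrix (Fin n) (Fin n) ℝ => M.det) ((detCM n).linearDeriv X) X :=
  (detCM n).hasFDerivAt X

lemma linearDeriv_det_apply {n : ℕ} (X H : Matrix (Fin n) (Fin n) ℝ) :
    (detCM n).linearDeriv X H = (X.adjugate * H).trace := by
  erw [ContinuousMultilinearMap.linearDeriv_apply]
  have h1 : (∑ i, detCM n (Function.update X i (H i)))
      = ∑ i, Matrix.cramer Xᵀ (H i) i := by
    refine Finset.sum_congr rfl fun i _ => ?_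
    have : detCM n (Function.update X i (H i)) = (X.updateRow i (H i)).det := rfl
    rw [this, ← Matrix.cramer_transpose_apply]
  rw [h1]
  have h2 : ∀ i, Matrix.cramer Xᵀ (H i) = ∑ j, H i j • Matrix.cramer Xᵀ ((Pi.single j 1 : Fin n → ℝ)) := by
    intro i
    have hHi : H i = ∑ j, H i j • (Pi.single j 1 : Fin n → ℝ) := by
      ext k
      simp [Pi.single_apply, eq_comm]
    conv_lhs => rw [hHi]
    simp only [map_sum, _root_.map_smul]
  simp_rw [h2]
  have h3 : ∀ i j, Matrix.cramer Xᵀ ((Pi.single j 1 : Fin n → ℝ)) i = X.adjugate j i := fun i j => rfl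
  rw [Matrix.trace]
  simp only [Finset.sum_apply, Pi.smul_apply, smul_eq_mul, Matrix.diag_apply, Matrix.mul_apply, h3]
  rw [Finset.sum_comm]
  refine Finset.sum_congr rfl fun i _ => Finset.sum_congr rfl fun j _ => ?_
  ring

noncomputable def mulCLM (n : ℕ) :
    Matrix (Fin n) (Fin n) ℝ →L[ℝ] Matrix (Fin n) (Fin n) ℝ →L[ℝ] Matrix (Fin n) (Fin n) ℝ :=
  LinearMap.toContinuousLinearMap
    ((LinearMap.toContinuousLinearMap :
        (Matrix (Fin n) (Fin n) ℝ →ₗ[ℝ] Matrix (Fin n) (Fin n) ℝ) ≃ₗ[ℝ]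
        (Matrix (Fin n) (Fin n) ℝ →L[ℝ] Matrix (Fin n) (Fin n) ℝ)).toLinearMap ∘ₗ
      LinearMap.mul ℝ (Matrix (Fin n) (Fin n) ℝ))

lemma mulCLM_apply {n : ℕ} (A B : Matrix (Fin n) (Fin n) ℝ) : mulCLM n A B = A * B := rfl

noncomputable def traceCLM (n : ℕ) : Matrix (Fin n) (Fin n) ℝ →L[ℝ] ℝ :=
  LinearMap.toContinuousLinearMap (Matrix.traceLinearMap (Fin n) ℝ ℝ)

lemma traceCLM_apply {n : ℕ} (A : Matrix (Fin n) (Fin n) ℝ) : traceCLM n A = A.trace := rfl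

noncomputable def transCLM (n : ℕ) :
    Matrix (Fin n) (Fin n) ℝ →L[ℝ] Matrix (Fin n) (Fin n) ℝ :=
  LinearMap.toContinuousLinearMap (Matrix.transposeLinearEquiv (Fin n) (Fin n) ℝ ℝ).toLinearMap

lemma transCLM_apply {n : ℕ} (A : Matrix (Fin n) (Fin n) ℝ) : transCLM n A = Aᵀ := rfl

lemma HasFDerivAt.matmul {n : ℕ} {E : Type*} [NormedAddCommGroup E] [NormedSpace ℝ E]
    {f g : E → Matrix (Fin n) (Fin n) ℝ} {f' g' : E →L[ℝ] Matrix (Fin n) (Fin n) ℝ} {x : E}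
    (hf : HasFDerivAt f f' x) (hg : HasFDerivAt g g' x) :
    HasFDerivAt (fun u => f u * g u)
      (((mulCLM n).isBoundedBilinearMap.deriv (f x, g x)).comp (f'.prod g')) x :=
  by have h := ((mulCLM n).isBoundedBilinearMap.hasFDerivAt (f x, g x)).comp x (hf.prodMk hg); exact h

lemma matmul_deriv_apply {n : ℕ} {E : Type*} [NormedAddCommGroup E] [NormedSpace ℝ E]
    (a b : Matrix (Fin n) (Fin n) ℝ) (f' g' : E →L[ℝ] Matrix (Fin n) (Fin n) ℝ) (H : E) :
    (((mulCLM n).isBoundedBilinearMap.deriv (a, b)).comp (f'.prod g')) H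
      = a * g' H + f' H * b := by
  rfl

/-- Gradient of the KL objective `J(U) = KL(Σ(U) ‖ Σref)` subject to the Lyapunov constraint
`(A+U) Σ(U) (A+U)ᵀ − Σ(U) + BBᵀ = 0`: if `Σ` is Fréchet differentiable at `U†`, satisfies the
constraint near `U†`, `Σ† = Σ(U†)` is symmetric positive definite, and the symmetric matrix `Λ†`
solves the adjoint Lyapunov equation `(A+U†)ᵀ Λ† (A+U†) − Λ† + (1/2)(Σref⁻¹ − (Σ†)⁻¹) = 0`,
then `J` is differentiable at `U†` with derivative `H ↦ tr((2 Λ† (A+U†) Σ†)ᵀ H)`,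
i.e. the gradient of `J` at `U†` is `2 Λ† (A+U†) Σ†`. -/
theorem gradient_of_KL_objective {n m : ℕ}
    (A Udag : Matrix (Fin n) (Fin n) ℝ) (B : Matrix (Fin n) (Fin m) ℝ)
    (Sref : Matrix (Fin n) (Fin n) ℝ) (href : Sref.PosDef)
    (Sig : Matrix (Fin n) (Fin n) ℝ → Matrix (Fin n) (Fin n) ℝ)
    (hdiff : DifferentiableAt ℝ Sig Udag)
    (hLyap : ∀ᶠ U in nhds Udag, (A + U) * Sig U * (A + U)ᵀ - Sig U + B * Bᵀ = 0)
    (hpd : (Sig Udag).PosDef)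
    (Ldag : Matrix (Fin n) (Fin n) ℝ) (hLsymm : Ldag.IsSymm)
    (hadj : (A + Udag)ᵀ * Ldag * (A + Udag) - Ldag
        + (1 / 2 : ℝ) • (Sref⁻¹ - (Sig Udag)⁻¹) = 0) :
    ∃ f' : Matrix (Fin n) (Fin n) ℝ →L[ℝ] ℝ,
      HasFDerivAt (fun U : Matrix (Fin n) (Fin n) ℝ =>
          (1 / 2) * ((Sref⁻¹ * Sig U).trace - (n : ℝ)
            + Real.log Sref.det - Real.log (Sig U).det))
        f' Udag ∧
      ∀ H : Matrix (Fin n) (Fin n) ℝ,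
        f' H = (((2 : ℝ) • (Ldag * (A + Udag) * Sig Udag))ᵀ * H).trace := by
  classical
  have hS : HasFDerivAt Sig (fderiv ℝ Sig Udag) Udag := hdiff.hasFDerivAt
  set S' : Matrix (Fin n) (Fin n) ℝ →L[ℝ] Matrix (Fin n) (Fin n) ℝ := fderiv ℝ Sig Udag with hS'def
  set S : Matrix (Fin n) (Fin n) ℝ := Sig Udag with hSdef
  set M : Matrix (Fin n) (Fin n) ℝ := A + Udag with hMdef
  -- derivative of U ↦ trace (Sref⁻¹ * Sig U)
  have hB : HasFDerivAt (fun U => (Sref⁻¹ * Sig U).trace)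
      (((traceCLM n).comp (mulCLM n Sref⁻¹)).comp S') Udag :=
    (((traceCLM n).comp (mulCLM n Sref⁻¹)).hasFDerivAt).comp Udag hS
  -- derivative of U ↦ det (Sig U)
  have hdet : HasFDerivAt (fun U => (Sig U).det) (((detCM n).linearDeriv S).comp S') Udag :=
    (hasFDerivAt_det S).comp Udag hS
  have hdetS : S.det ≠ 0 := ne_of_gt hpd.det_pos
  have hlog : HasFDerivAt (fun U => Real.log ((Sig U).det))
      ((S.det)⁻¹ • (((detCM n).linearDeriv S).comp S')) Udag :=
    by have h := (Real.hasDerivAt_log hdetS).comp_hasFDerivAt Udag hdet; exact h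
  -- total derivative of J
  have hJ : HasFDerivAt (fun U : Matrix (Fin n) (Fin n) ℝ =>
      (1 / 2) * ((Sref⁻¹ * Sig U).trace - (n : ℝ)
        + Real.log Sref.det - Real.log (Sig U).det))
      ((1 / 2 : ℝ) • ((((traceCLM n).comp (mulCLM n Sref⁻¹)).comp S'
        - (S.det)⁻¹ • (((detCM n).linearDeriv S).comp S')))) Udag :=
    (((hB.sub_const (n : ℝ)).add_const (Real.log Sref.det)).sub hlog).const_mul (1 / 2 : ℝ)
  -- derivative of the constraint
  have hid : HasFDerivAt (fun U : Matrix (Fin n) (Fin n) ℝ => A + U)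
      (ContinuousLinearMap.id ℝ _) Udag := (hasFDerivAt_id Udag).const_add A
  have htr : HasFDerivAt (fun U : Matrix (Fin n) (Fin n) ℝ => (A + U)ᵀ)
      ((transCLM n).comp (ContinuousLinearMap.id ℝ _)) Udag :=
    ((transCLM n).hasFDerivAt).comp Udag hid
  have hfg : HasFDerivAt (fun U => (A + U) * Sig U)
      (((mulCLM n).isBoundedBilinearMap.deriv (M, S)).comp
        ((ContinuousLinearMap.id ℝ _).prod S')) Udag := hid.matmul hS
  have hprod : HasFDerivAt (fun U => (A + U) * Sig U * (A + U)ᵀ)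
      (((mulCLM n).isBoundedBilinearMap.deriv (M * S, Mᵀ)).comp
        (((((mulCLM n).isBoundedBilinearMap.deriv (M, S)).comp
          ((ContinuousLinearMap.id ℝ _).prod S'))).prod
          ((transCLM n).comp (ContinuousLinearMap.id ℝ _)))) Udag := hfg.matmul htr
  have hG : HasFDerivAt (fun U => (A + U) * Sig U * (A + U)ᵀ - Sig U + B * Bᵀ)
      _ Udag :=
    (hprod.sub hS).add_const (B * Bᵀ)
  have hG0 : HasFDerivAt (fun U => (A + U) * Sig U * (A + U)ᵀ - Sig U + B * Bᵀ)
      (0 : Matrix (Fin n) (Fin n) ℝ →L[ℝ] Matrix (Fin n) (Fin n) ℝ) Udag :=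
    (hasFDerivAt_const (0 : Matrix (Fin n) (Fin n) ℝ) Udag).congr_of_eventuallyEq hLyap
  have hDzero := hG.unique hG0
  have hcon : ∀ H : Matrix (Fin n) (Fin n) ℝ,
      M * S * Hᵀ + (M * S' H + H * S) * Mᵀ - S' H = 0 := by
    intro H
    have h0 := congrArg (fun L => L H) hDzero
    simp only [ContinuousLinearMap.sub_apply, ContinuousLinearMap.zero_apply] at h0
    exact h0
  refine ⟨_, hJ, fun H => ?_⟩
  -- evaluate the derivative
  have hval : ((1 / 2 : ℝ) • ((((traceCLM n).comp (mulCLM n Sref⁻¹)).comp S'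
        - (S.det)⁻¹ • (((detCM n).linearDeriv S).comp S')))) H
      = (1 / 2 : ℝ) * ((Sref⁻¹ * S' H).trace - (S.det)⁻¹ * ((S.adjugate * S' H).trace)) := by
    simp only [ContinuousLinearMap.smul_apply, ContinuousLinearMap.sub_apply,
      ContinuousLinearMap.comp_apply, smul_eq_mul, linearDeriv_det_apply]
    erw [ContinuousLinearMap.comp_apply, linearDeriv_det_apply]
    rfl
  rw [hval]
  -- now pure matrix algebra
  set K : Matrix (Fin n) (Fin n) ℝ := S' H with hKdef
  have hSsymm : Sᵀ = S := by
    have h : Sᴴ = S := hpd.isHermitian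
    calc Sᵀ = Sᴴ := by ext i j; simp [Matrix.conjTranspose_apply]
      _ = S := h
  have hLs : Ldagᵀ = Ldag := hLsymm
  have hinv : S⁻¹ = (S.det)⁻¹ • S.adjugate := by
    rw [Matrix.inv_def, Ring.inverse_eq_inv']
  have e0 : (S.det)⁻¹ * ((S.adjugate * K).trace) = (S⁻¹ * K).trace := by
    rw [hinv, Matrix.smul_mul, Matrix.trace_smul, smul_eq_mul]
  rw [e0]
  have hP : (1 / 2 : ℝ) • (Sref⁻¹ - S⁻¹) = Ldag - Mᵀ * Ldag * M := by
    have h := neg_eq_of_add_eq_zero_right hadj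
    rw [← h, neg_sub]
  have hMKM : M * K * Mᵀ = K - M * S * Hᵀ - H * S * Mᵀ := by
    have h := hcon H
    rw [Matrix.add_mul (M * S' H) (H * S) Mᵀ] at h
    have h2 : M * S * Hᵀ + (M * K * Mᵀ + H * S * Mᵀ) = K := sub_eq_zero.mp h
    conv_rhs => rw [← h2]
    abel
  have lhs1 : (1 / 2 : ℝ) * ((Sref⁻¹ * K).trace - (S⁻¹ * K).trace)
      = (((1 / 2 : ℝ) • (Sref⁻¹ - S⁻¹)) * K).trace := by
    rw [Matrix.smul_mul, Matrix.sub_mul, Matrix.trace_smul, Matrix.trace_sub, smul_eq_mul]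
  rw [lhs1, hP]
  have lhs2 : ((Ldag - Mᵀ * Ldag * M) * K).trace
      = (Ldag * K).trace - (Ldag * (M * K * Mᵀ)).trace := by
    rw [Matrix.sub_mul, Matrix.trace_sub]
    congr 1
    calc ((Mᵀ * Ldag * M) * K).trace = (Mᵀ * (Ldag * M * K)).trace := by congr 1; noncomm_ring
      _ = ((Ldag * M * K) * Mᵀ).trace := Matrix.trace_mul_comm _ _
      _ = (Ldag * (M * K * Mᵀ)).trace := by congr 1; noncomm_ring
  rw [lhs2, hMKM]
  have lhs3 : (Ldag * (K - M * S * Hᵀ - H * S * Mᵀ)).trace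
      = (Ldag * K).trace - (Ldag * (M * S * Hᵀ)).trace - (Ldag * (H * S * Mᵀ)).trace := by
    rw [Matrix.mul_sub, Matrix.mul_sub, Matrix.trace_sub, Matrix.trace_sub]
  rw [lhs3]
  have t1 : (Ldag * (M * S * Hᵀ)).trace = ((Ldag * M * S)ᵀ * H).trace := by
    have h : Ldag * (M * S * Hᵀ) = (Ldag * M * S) * Hᵀ := by noncomm_ring
    rw [h, ← Matrix.trace_transpose ((Ldag * M * S) * Hᵀ), Matrix.transpose_mul,
      Matrix.transpose_transpose, Matrix.trace_mul_comm]
  have t2 : (Ldag * (H * S * Mᵀ)).trace = ((Ldag * M * S)ᵀ * H).trace := by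
    have h1 : (Ldag * M * S)ᵀ = S * Mᵀ * Ldag := by
      rw [Matrix.transpose_mul, Matrix.transpose_mul, hSsymm, hLs, ← Matrix.mul_assoc]
    rw [h1]
    calc (Ldag * (H * S * Mᵀ)).trace = ((Ldag * H) * (S * Mᵀ)).trace := by congr 1; noncomm_ring
      _ = ((S * Mᵀ) * (Ldag * H)).trace := Matrix.trace_mul_comm _ _
      _ = ((S * Mᵀ * Ldag) * H).trace := by congr 1; noncomm_ring
  rw [t1, t2]
  have rhs : (((2 : ℝ) • (Ldag * M * S))ᵀ * H).trace
      = 2 * ((Ldag * M * S)ᵀ * H).trace := by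
    rw [Matrix.transpose_smul, Matrix.smul_mul, Matrix.trace_smul, smul_eq_mul]
  rw [rhs]
  ring
end

section
/- Let Σ₁, Σ₂ be symmetric positive definite n×n real matrices. Then tr(Σ₂⁻¹ Σ₁) − n + log(det Σ₂ / det Σ₁) ≥ 0, with equality if and only if Σ₁ = Σ₂. -/
open Matrix

private lemma posDef_conj_aux {n : ℕ} {A B : Matrix (Fin n) (Fin n) ℝ}
    (hA : A.PosDef) (hB : IsUnit B.det) : (Bᴴ * A * B).PosDef := by
  refine Matrix.PosDef.of_dotProduct_mulVec_pos (Matrix.isHermitian_conjTranspose_mul_mul B hA.1) fun x hx => ?_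
  have hinj : Function.Injective (B.mulVec) :=
    Matrix.mulVec_injective_iff_isUnit.mpr ((Matrix.isUnit_iff_isUnit_det B).2 hB)
  have hBx : B *ᵥ x ≠ 0 := fun h => hx (hinj (by simpa using h))
  simpa only [star_mulVec, dotProduct_mulVec, vecMul_vecMul] using hA.dotProduct_mulVec_pos hBx

private lemma trace_eq_sum_eigenvalues_aux {n : ℕ} {A : Matrix (Fin n) (Fin n) ℝ}
    (hA : A.IsHermitian) : A.trace = ∑ i, hA.eigenvalues i := by
  conv_lhs => rw [hA.spectral_theorem]
  rw [Unitary.conjStarAlgAut_apply, Matrix.trace_mul_cycle]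
  have : (star (hA.eigenvectorUnitary : Matrix (Fin n) (Fin n) ℝ)) *
      (hA.eigenvectorUnitary : Matrix (Fin n) (Fin n) ℝ) = 1 := by
    exact_mod_cast Unitary.coe_star_mul_self hA.eigenvectorUnitary
  rw [this, Matrix.one_mul, Matrix.trace_diagonal]
  simp [RCLike.ofReal]

/-- Nonnegativity of the Gaussian KL divergence in closed form: for symmetric positive
definite `Σ₁, Σ₂`, one has `tr(Σ₂⁻¹ Σ₁) − n + log(det Σ₂ / det Σ₁) ≥ 0`, with equality
iff `Σ₁ = Σ₂`. -/
theorem gaussian_kl_nonneg {n : ℕ}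
    (S1 S2 : Matrix (Fin n) (Fin n) ℝ) (h1 : S1.PosDef) (h2 : S2.PosDef) :
    0 ≤ (S2⁻¹ * S1).trace - (n : ℝ) + Real.log (S2.det / S1.det) ∧
    ((S2⁻¹ * S1).trace - (n : ℝ) + Real.log (S2.det / S1.det) = 0 ↔ S1 = S2) := by
  classical
  have h2i : (S2⁻¹).PosDef := h2.inv
  set R : Matrix (Fin n) (Fin n) ℝ := (open scoped MatrixOrder in CFC.sqrt (S2⁻¹)) with hRdef
  have hRps : R.PosSemidef := by open scoped MatrixOrder in exact (CFC.sqrt_nonneg _).posSemidef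
  have hRR : R * R = S2⁻¹ := by open scoped MatrixOrder in exact CFC.sqrt_mul_sqrt_self _ h2i.posSemidef.nonneg
  have hRdet : IsUnit R.det := by
    have hsq : R.det * R.det = (S2⁻¹).det := by rw [← Matrix.det_mul, hRR]
    refine isUnit_iff_ne_zero.2 fun h0 => h2i.det_pos.ne' ?_
    rw [← hsq, h0, mul_zero]
  have hRH : Rᴴ = R := hRps.1
  have hB : (R * S1 * R).PosDef := by
    have := posDef_conj_aux h1 hRdet
    rwa [hRH] at this
  set B : Matrix (Fin n) (Fin n) ℝ := R * S1 * R with hBdef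
  have hBH : B.IsHermitian := hB.1
  set μ : Fin n → ℝ := hBH.eigenvalues with hμdef
  have hμpos : ∀ i, 0 < μ i := hB.eigenvalues_pos
  -- trace identity
  have htr : (S2⁻¹ * S1).trace = B.trace := by
    rw [hBdef, Matrix.trace_mul_cycle, hRR]
  -- determinant identity
  have hdetB : B.det = S1.det / S2.det := by
    have : B.det = (R * R).det * S1.det := by
      rw [hBdef, Matrix.det_mul, Matrix.det_mul, Matrix.det_mul]
      ring
    rw [this, hRR, Matrix.det_nonsing_inv, Ring.inverse_eq_inv']
    field_simp
  have htrB : B.trace = ∑ i, μ i := trace_eq_sum_eigenvalues_aux hBH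
  have hdetμ : B.det = ∏ i, μ i := by
    have := hBH.det_eq_prod_eigenvalues
    simpa [RCLike.ofReal] using this
  have hlogB : Real.log B.det = ∑ i, Real.log (μ i) := by
    rw [hdetμ, Real.log_prod (fun i _ => (hμpos i).ne')]
  have hlog : Real.log (S2.det / S1.det) = - Real.log B.det := by
    rw [hdetB, Real.log_div h1.det_pos.ne' h2.det_pos.ne',
      Real.log_div h2.det_pos.ne' h1.det_pos.ne']
    ring
  have key : (S2⁻¹ * S1).trace - (n : ℝ) + Real.log (S2.det / S1.det)
      = ∑ i, (μ i - 1 - Real.log (μ i)) := by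
    rw [htr, htrB, hlog, hlogB]
    simp [Finset.sum_sub_distrib]
    ring
  have hterm : ∀ i ∈ Finset.univ, 0 ≤ μ i - 1 - Real.log (μ i) := fun i _ => by
    have := Real.log_le_sub_one_of_pos (hμpos i)
    linarith
  constructor
  · rw [key]
    exact Finset.sum_nonneg hterm
  · constructor
    · intro h0
      rw [key] at h0
      have hall := (Finset.sum_eq_zero_iff_of_nonneg hterm).1 h0
      have hμ1 : ∀ i, μ i = 1 := by
        intro i
        by_contra hne
        have := Real.log_lt_sub_one_of_pos (hμpos i) hne
        have := hall i (Finset.mem_univ i)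
        linarith
      -- B = 1
      have hBone : B = 1 := by
        have hsp := hBH.spectral_theorem
        have hdiag : Matrix.diagonal (RCLike.ofReal ∘ μ) = (1 : Matrix (Fin n) (Fin n) ℝ) := by
          have hfun : (RCLike.ofReal ∘ μ : Fin n → ℝ) = fun _ => 1 := by
            funext i; simp [hμ1 i, RCLike.ofReal]
          rw [hfun, Matrix.diagonal_one]
        rw [hdiag] at hsp
        rw [hsp, Unitary.conjStarAlgAut_apply, Matrix.mul_one]
        exact_mod_cast Unitary.coe_mul_star_self hBH.eigenvectorUnitary
      -- conclude S1 = S2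
      have hRu : IsUnit R := (Matrix.isUnit_iff_isUnit_det R).2 hRdet
      have hS1 : S1 = R⁻¹ * R⁻¹ := by
        have h' : R⁻¹ * (R * S1 * R) * R⁻¹ = R⁻¹ * R⁻¹ := by
          rw [show (R * S1 * R : Matrix (Fin n) (Fin n) ℝ) = B from rfl, hBone]
          simp
        rwa [← Matrix.mul_assoc, ← Matrix.mul_assoc, Matrix.nonsing_inv_mul _ hRdet,
          Matrix.one_mul, Matrix.mul_assoc, Matrix.mul_nonsing_inv _ hRdet,
          Matrix.mul_one] at h'
      rw [hS1, ← Matrix.mul_inv_rev, hRR, Matrix.nonsing_inv_nonsing_inv _ h2.det_pos.ne'.isUnit]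
    · rintro rfl
      rw [Matrix.nonsing_inv_mul _ h1.det_pos.ne'.isUnit, Matrix.trace_one,
        div_self h1.det_pos.ne', Real.log_one]
      simp
end

section
/- Let A be an n×n real matrix all of whose complex eigenvalues have modulus strictly less than 1 (A is Schur stable), and let Q be an n×n real matrix. Then the series Σ_{k=0}^{∞} Aᵏ Q (Aᵀ)ᵏ converges, and its sum Σ satisfies the discrete Lyapunov equation A Σ Aᵀ − Σ + Q = 0. -/
open Matrix

/-- `A` is Schur stable: every complex eigenvalue of `A` has modulus strictly less than 1. -/
def IsSchurStable {n : ℕ} (A : Matrix (Fin n) (Fin n) ℝ) : Prop :=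
  ∀ μ ∈ spectrum ℂ (A.map (Complex.ofReal ·)), ‖μ‖ < 1

attribute [local instance] Matrix.linftyOpNormedAddCommGroup Matrix.linftyOpNormedRing
  Matrix.linftyOpNormedAlgebra Matrix.linftyOpNormedSpace

open Filter in
/-- Power decay from spectral radius `< 1`. -/
lemma schur_pow_bound {n : ℕ} (hn : 0 < n) (B : Matrix (Fin n) (Fin n) ℂ)
    (hB : ∀ μ ∈ spectrum ℂ B, ‖μ‖ < 1) :
    ∃ r : NNReal, r < 1 ∧ ∃ N : ℕ, ∀ k ≥ N, ‖B ^ k‖₊ ≤ r ^ k := by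
  haveI : Nonempty (Fin n) := Fin.pos_iff_nonempty.mp hn
  haveI : CompleteSpace (Matrix (Fin n) (Fin n) ℂ) :=
    FiniteDimensional.complete ℂ (Matrix (Fin n) (Fin n) ℂ)
  have hρ : spectralRadius ℂ B < 1 := by
    have := spectrum.spectralRadius_lt_of_forall_lt (a := B) (r := 1)
      (fun z hz => by simpa using (show ‖z‖₊ < 1 from by rw [← NNReal.coe_lt_coe]; simpa using hB z hz))
    simpa using this
  obtain ⟨r, hr1, hr2⟩ := ENNReal.lt_iff_exists_nnreal_btwn.mp hρ
  have hr2' : r < 1 := by exact_mod_cast hr2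
  have hG := spectrum.pow_nnnorm_pow_one_div_tendsto_nhds_spectralRadius B
  have hev : ∀ᶠ k : ℕ in atTop, ((‖B ^ k‖₊ : ENNReal) ^ (1 / (k : ℝ))) < (r : ENNReal) :=
    hG.eventually_lt_const hr1
  obtain ⟨N, hN⟩ := hev.exists_forall_of_atTop
  refine ⟨r, hr2', max N 1, fun k hk => ?_⟩
  have hk1 : 1 ≤ k := le_trans (le_max_right N 1) hk
  have hkN : N ≤ k := le_trans (le_max_left N 1) hk
  have h := hN k hkN
  have hk0 : (k : ℝ) ≠ 0 := by positivity
  have hpow : ((‖B ^ k‖₊ : ENNReal) ^ (1 / (k : ℝ))) ^ (k : ℝ) ≤ (r : ENNReal) ^ (k : ℝ) :=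
    ENNReal.rpow_le_rpow h.le (by positivity)
  rw [← ENNReal.rpow_mul, one_div, inv_mul_cancel₀ hk0, ENNReal.rpow_one] at hpow
  rw [ENNReal.rpow_natCast, ← ENNReal.coe_pow, ENNReal.coe_le_coe] at hpow
  exact hpow

lemma nnnorm_map_ofReal {n : ℕ} (M : Matrix (Fin n) (Fin n) ℝ) :
    ‖M.map (Complex.ofReal ·)‖₊ = ‖M‖₊ := by
  simp [Matrix.linfty_opNNNorm_def, Matrix.map_apply]

lemma spectrum_transpose {n : ℕ} (B : Matrix (Fin n) (Fin n) ℂ) :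
    spectrum ℂ Bᵀ = spectrum ℂ B := by
  ext μ
  simp only [spectrum.mem_iff, not_iff_not]
  have : algebraMap ℂ (Matrix (Fin n) (Fin n) ℂ) μ - Bᵀ =
      (algebraMap ℂ (Matrix (Fin n) (Fin n) ℂ) μ - B)ᵀ := by
    rw [transpose_sub]
    congr 1
    simp [Matrix.algebraMap_eq_diagonal]
  rw [this, Matrix.isUnit_iff_isUnit_det, Matrix.det_transpose,
    ← Matrix.isUnit_iff_isUnit_det]

/-- If `A` is Schur stable then the series `Σₖ Aᵏ Q (Aᵀ)ᵏ` converges, and its sum `S`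
solves the discrete Lyapunov equation `A S Aᵀ − S + Q = 0`. -/
theorem lyapunov_series_solution {n : ℕ}
    (A Q : Matrix (Fin n) (Fin n) ℝ) (hA : IsSchurStable A) :
    ∃ S : Matrix (Fin n) (Fin n) ℝ,
      HasSum (fun k : ℕ => A ^ k * Q * (Aᵀ) ^ k) S ∧
      A * S * Aᵀ - S + Q = 0 := by
  rcases Nat.eq_zero_or_pos n with hn | hn
  · subst hn
    refine ⟨0, ?_, Subsingleton.elim _ _⟩
    have : (fun k : ℕ => A ^ k * Q * (Aᵀ) ^ k) = fun _ => 0 := by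
      funext k; exact Subsingleton.elim _ _
    rw [this]
    exact hasSum_zero
  haveI : Nonempty (Fin n) := Fin.pos_iff_nonempty.mp hn
  haveI : CompleteSpace (Matrix (Fin n) (Fin n) ℝ) :=
    FiniteDimensional.complete ℝ (Matrix (Fin n) (Fin n) ℝ)
  set B := A.map (Complex.ofReal ·) with hBdef
  have hmap : ∀ M N : Matrix (Fin n) (Fin n) ℝ,
      (M * N).map (Complex.ofReal ·) =
        M.map (Complex.ofReal ·) * N.map (Complex.ofReal ·) := fun M N =>
    Matrix.map_mul (f := Complex.ofRealHom)
  have hmappow : ∀ (M : Matrix (Fin n) (Fin n) ℝ) (k : ℕ),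
      (M ^ k).map (Complex.ofReal ·) = (M.map (Complex.ofReal ·)) ^ k := by
    intro M k
    induction k with
    | zero => simp [Matrix.map_one (f := Complex.ofRealHom) rfl (by simp)]
    | succ k ih => rw [pow_succ, pow_succ, hmap, ih]
  -- transpose commutes with map
  have hmapT : (Aᵀ).map (Complex.ofReal ·) = Bᵀ := rfl
  -- spectrum of transpose
  have hAT : ∀ μ ∈ spectrum ℂ Bᵀ, ‖μ‖ < 1 := by
    intro μ hμ
    exact hA μ ((spectrum_transpose B) ▸ hμ)
  obtain ⟨r₁, hr₁, N₁, hN₁⟩ := schur_pow_bound hn B hA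
  obtain ⟨r₂, hr₂, N₂, hN₂⟩ := schur_pow_bound hn Bᵀ hAT
  -- summability of the series
  set f : ℕ → Matrix (Fin n) (Fin n) ℝ := fun k => A ^ k * Q * (Aᵀ) ^ k with hf
  have hsum : Summable f := by
    have ht : (r₁ * r₂ : NNReal) < 1 :=
      lt_of_le_of_lt (mul_le_mul hr₁.le le_rfl zero_le zero_le) (by simpa using hr₂)
    refine Summable.of_norm_bounded_eventually_nat
      (g := fun k => (‖Q‖₊ : ℝ) * ((r₁ * r₂ : NNReal) : ℝ) ^ k) ?_ ?_
    · exact (summable_geometric_of_lt_one (by positivity) (by exact_mod_cast ht)).mul_left _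
    · filter_upwards [Filter.eventually_ge_atTop (max N₁ N₂)] with k hk
      have h₁ : ‖A ^ k‖₊ ≤ r₁ ^ k := by
        rw [← nnnorm_map_ofReal, hmappow]
        exact hN₁ k (le_trans (le_max_left _ _) hk)
      have h₂ : ‖(Aᵀ) ^ k‖₊ ≤ r₂ ^ k := by
        rw [← nnnorm_map_ofReal, hmappow, hmapT]
        exact hN₂ k (le_trans (le_max_right _ _) hk)
      have hb : ‖f k‖₊ ≤ ‖Q‖₊ * (r₁ * r₂) ^ k := by
        calc ‖A ^ k * Q * (Aᵀ) ^ k‖₊ ≤ ‖A ^ k * Q‖₊ * ‖(Aᵀ) ^ k‖₊ := nnnorm_mul_le _ _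
          _ ≤ ‖A ^ k‖₊ * ‖Q‖₊ * ‖(Aᵀ) ^ k‖₊ :=
              mul_le_mul (nnnorm_mul_le _ _) le_rfl zero_le zero_le
          _ ≤ r₁ ^ k * ‖Q‖₊ * r₂ ^ k := by
              exact mul_le_mul (mul_le_mul h₁ le_rfl zero_le zero_le) h₂
                zero_le zero_le
          _ = ‖Q‖₊ * (r₁ * r₂) ^ k := by ring
      calc ‖f k‖ = ((‖f k‖₊ : ℝ)) := rfl
        _ ≤ ((‖Q‖₊ * (r₁ * r₂) ^ k : NNReal) : ℝ) := by exact_mod_cast hb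
        _ = (‖Q‖₊ : ℝ) * ((r₁ * r₂ : NNReal) : ℝ) ^ k := by push_cast; ring
  obtain ⟨S, hS⟩ := hsum
  refine ⟨S, hS, ?_⟩
  -- apply the continuous linear map X ↦ A * X * Aᵀ
  let L : Matrix (Fin n) (Fin n) ℝ →ₗ[ℝ] Matrix (Fin n) (Fin n) ℝ :=
    { toFun := fun X => A * X * Aᵀ
      map_add' := fun X Y => by simp [mul_add, add_mul]
      map_smul' := fun c X => by simp [Matrix.mul_smul, Matrix.smul_mul] }
  have hLcont : Continuous L := L.continuous_of_finiteDimensional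
  have hS2 : HasSum (fun k => A * f k * Aᵀ) (A * S * Aᵀ) :=
    hS.map L hLcont
  have hshift : (fun k => A * f k * Aᵀ) = fun k => f (k + 1) := by
    funext k
    simp only [hf]
    rw [pow_succ' A k, pow_succ Aᵀ k]
    noncomm_ring
  rw [hshift] at hS2
  have := (hasSum_nat_add_iff (f := f) 1).mp hS2
  have hf0 : f 0 = Q := by simp [hf]
  have hSeq : S = A * S * Aᵀ + Q := by
    have := hS.unique this
    simpa [hf0] using this
  have h' : A * S * Aᵀ = S - Q := eq_sub_of_add_eq hSeq.symm
  rw [h']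
  abel
end

section
/- Let A be an n×n real matrix all of whose complex eigenvalues have modulus strictly less than 1 (A is Schur stable), and let Q be an n×n real matrix. Then the discrete Lyapunov equation A Σ Aᵀ − Σ + Q = 0 has at most one solution Σ among n×n real matrices: if Σ₁ and Σ₂ both satisfy the equation, then Σ₁ = Σ₂. -/
open Matrix Filter Topology
open scoped ENNReal NNReal

attribute [local instance] Matrix.linftyOpNormedRing Matrix.linftyOpNormedAlgebra

lemma pow_tendsto_zero_of_spectralRadius_lt_one {A : Type*} [NormedRing A] [NormedAlgebra ℂ A]
    [CompleteSpace A] (b : A) (hb : spectralRadius ℂ b < 1) :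
    Tendsto (fun k : ℕ => b ^ k) atTop (𝓝 0) := by
  obtain ⟨c, hc1, hc2⟩ := ENNReal.lt_iff_exists_nnreal_btwn.mp hb
  have hgel := spectrum.pow_nnnorm_pow_one_div_tendsto_nhds_spectralRadius b
  have hev : ∀ᶠ k : ℕ in atTop, (‖b ^ k‖₊ : ℝ≥0∞) ^ (1 / (k : ℝ)) < (c : ℝ≥0∞) :=
    hgel.eventually (Filter.Tendsto.eventually_lt_const hc1 tendsto_id) |>.mono fun k hk => hk
  have hc1' : (c : ℝ) < 1 := by exact_mod_cast (by exact_mod_cast hc2 : c < (1 : ℝ≥0))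
  rw [tendsto_zero_iff_norm_tendsto_zero]
  have hnorm : ∀ᶠ k : ℕ in atTop, ‖b ^ k‖ ≤ (c : ℝ) ^ k := by
    filter_upwards [hev, eventually_ge_atTop 1] with k hk hk1
    have hkpos : (0 : ℝ) < k := by exact_mod_cast hk1
    have := ENNReal.rpow_lt_rpow hk (by positivity : (0:ℝ) < (k : ℝ))
    rw [← ENNReal.rpow_mul, one_div, inv_mul_cancel₀ (ne_of_gt hkpos), ENNReal.rpow_one,
      ENNReal.rpow_natCast, ← ENNReal.coe_pow, ENNReal.coe_lt_coe] at this
    have : ‖b ^ k‖₊ ≤ c ^ k := le_of_lt this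
    exact_mod_cast this
  exact squeeze_zero' (.of_forall fun k => norm_nonneg _) hnorm
    (tendsto_pow_atTop_nhds_zero_of_lt_one c.2 hc1')

/-- If `A` is Schur stable then the discrete Lyapunov equation `A Σ Aᵀ − Σ + Q = 0` has at
most one solution. -/
theorem lyapunov_solution_unique {n : ℕ}
    (A Q : Matrix (Fin n) (Fin n) ℝ) (hA : IsSchurStable A)
    (S1 S2 : Matrix (Fin n) (Fin n) ℝ)
    (h1 : A * S1 * Aᵀ - S1 + Q = 0) (h2 : A * S2 * Aᵀ - S2 + Q = 0) :
    S1 = S2 := by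
  rcases Nat.eq_zero_or_pos n with hn | hn
  · subst hn; ext i j; exact i.elim0
  haveI : Nonempty (Fin n) := ⟨⟨0, hn⟩⟩
  set B : Matrix (Fin n) (Fin n) ℂ := A.map (Complex.ofReal ·) with hB
  set X : Matrix (Fin n) (Fin n) ℂ := (S1 - S2).map (Complex.ofReal ·) with hX
  have e : A * S1 * Aᵀ - S1 = A * S2 * Aᵀ - S2 := by
    rw [eq_neg_of_add_eq_zero_left h1, eq_neg_of_add_eq_zero_left h2]
  have hR : A * (S1 - S2) * Aᵀ = S1 - S2 := by
    rw [Matrix.mul_sub, Matrix.sub_mul]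
    exact sub_eq_sub_iff_sub_eq_sub.mp e
  have hmap : ∀ (M N : Matrix (Fin n) (Fin n) ℝ),
      (M * N).map (Complex.ofReal ·) = M.map (Complex.ofReal ·) * N.map (Complex.ofReal ·) :=
    fun M N => by
      ext i j
      simp [Matrix.mul_apply, Matrix.map_apply]
  have key : B * X * Bᵀ = X := by
    have h' : ((A * (S1 - S2)) * Aᵀ).map (Complex.ofReal ·) = B * X * Bᵀ := by
      rw [hmap, hmap, Matrix.transpose_map]
    rw [← h', hR]
  have hBt : spectrum ℂ Bᵀ = spectrum ℂ B := by
    ext z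
    simp only [spectrum.mem_iff, not_iff_not, Algebra.algebraMap_eq_smul_one]
    rw [show z • (1 : Matrix (Fin n) (Fin n) ℂ) - Bᵀ = (z • 1 - B)ᵀ by
      rw [Matrix.transpose_sub, Matrix.transpose_smul, Matrix.transpose_one]]
    exact Matrix.isUnit_transpose (A := z • 1 - B)
  have hrad : spectralRadius ℂ B < 1 := by
    have h1lt := spectrum.spectralRadius_lt_of_forall_lt (a := B) (r := 1) fun z hz => by
      simpa [← norm_toNNReal, Real.toNNReal_lt_one] using hA z hz
    simpa using h1lt
  have hradT : spectralRadius ℂ Bᵀ < 1 := by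
    have : spectralRadius ℂ Bᵀ = spectralRadius ℂ B := by
      unfold spectralRadius; rw [hBt]
    rw [this]; exact hrad
  have hp1 := pow_tendsto_zero_of_spectralRadius_lt_one B hrad
  have hp2 := pow_tendsto_zero_of_spectralRadius_lt_one Bᵀ hradT
  have hiter : ∀ k, B ^ k * X * Bᵀ ^ k = X := by
    intro k; induction k with
    | zero => simp
    | succ k ih =>
      rw [pow_succ, pow_succ']
      calc B ^ k * B * X * (Bᵀ * Bᵀ ^ k)
          = B ^ k * (B * X * Bᵀ) * Bᵀ ^ k := by simp only [mul_assoc]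
        _ = B ^ k * X * Bᵀ ^ k := by rw [key]
        _ = X := ih
  have hz : Filter.Tendsto (fun k : ℕ => B ^ k * X * Bᵀ ^ k) Filter.atTop (nhds 0) := by
    have := (hp1.mul (tendsto_const_nhds (x := X))).mul hp2
    rw [zero_mul, mul_zero] at this
    exact this
  have hz' : Filter.Tendsto (fun _ : ℕ => X) Filter.atTop (nhds 0) := by
    simpa only [hiter] using hz
  have hX0 : X = 0 := tendsto_nhds_unique tendsto_const_nhds hz'
  have hsub : S1 - S2 = 0 := by
    ext i j
    have := congrFun (congrFun hX0 i) j
    have h2 : ((S1 i j : ℂ) - S2 i j) = 0 := by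
      simpa [hX, Matrix.map_apply] using this
    exact_mod_cast h2
  exact sub_eq_zero.mp hsub
end

section
/- Let A be an n×n real matrix all of whose complex eigenvalues have modulus strictly less than 1 (A is Schur stable), let Q be an n×n real matrix, and let Σ⋆ be the unique solution of A Σ Aᵀ − Σ + Q = 0. Then for every initial n×n real matrix Σ₀, the iteration Σ_{k+1} = A Σ_k Aᵀ + Q converges to Σ⋆ as k → ∞. -/
open Matrix Filter

section Aux

attribute [local instance] Matrix.linftyOpNormedRing Matrix.linftyOpNormedAlgebra
  Matrix.linftyOpNormedSpace

private lemma schur_entry_nnnorm_le {n : ℕ} (M : Matrix (Fin n) (Fin n) ℂ) (i j : Fin n) :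
    ‖M i j‖₊ ≤ ‖M‖₊ := by
  rw [Matrix.linfty_opNNNorm_def]
  exact le_trans
    (Finset.single_le_sum (f := fun j => ‖M i j‖₊) (fun _ _ => zero_le) (Finset.mem_univ j))
    (Finset.le_sup (f := fun i => ∑ j, ‖M i j‖₊) (Finset.mem_univ i))

private lemma schur_pow_entry_tendsto {n : ℕ} (B : Matrix (Fin n) (Fin n) ℂ)
    (h : ∀ μ ∈ spectrum ℂ B, ‖μ‖ < 1) (i j : Fin n) :
    Tendsto (fun k : ℕ => (B ^ k) i j) atTop (nhds 0) := by
  haveI : Nonempty (Fin n) := ⟨i⟩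
  haveI : Nontrivial (Matrix (Fin n) (Fin n) ℂ) := inferInstance
  haveI : CompleteSpace (Matrix (Fin n) (Fin n) ℂ) :=
    FiniteDimensional.complete ℂ _
  -- spectral radius is < 1
  have hrad : spectralRadius ℂ B < 1 := by
    have := spectrum.spectralRadius_lt_of_forall_lt (a := B) (r := 1)
      (fun z hz => by
        have := h z hz
        exact_mod_cast this)
    simpa using this
  obtain ⟨r, hr1, hr2⟩ := exists_between hrad
  have hrtop : r ≠ ⊤ := ne_top_of_lt hr2
  -- Gelfand's formula
  have hG := spectrum.pow_nnnorm_pow_one_div_tendsto_nhds_spectralRadius B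
  have hev : ∀ᶠ k : ℕ in atTop, (‖B ^ k‖₊ : ENNReal) ^ (1 / (k : ℝ)) < r :=
    hG.eventually_lt_const hr1
  have hev2 : ∀ᶠ k : ℕ in atTop, (‖B ^ k‖₊ : ENNReal) ≤ r ^ (k : ℕ) := by
    filter_upwards [hev, eventually_ge_atTop 1] with k hk hk1
    have hk0 : (k : ℝ) ≠ 0 := by positivity
    have := ENNReal.rpow_le_rpow hk.le (by positivity : (0:ℝ) ≤ (k : ℝ))
    rwa [← ENNReal.rpow_mul, one_div, inv_mul_cancel₀ hk0, ENNReal.rpow_one,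
      ENNReal.rpow_natCast] at this
  -- pass to real norms
  set s : NNReal := r.toNNReal with hs
  have hs1 : (s : ℝ) < 1 := by
    have : r < (1 : NNReal) := by simpa using hr2
    exact_mod_cast ENNReal.toNNReal_lt_of_lt_coe this
  have hnorm : ∀ᶠ k : ℕ in atTop, ‖(B ^ k) i j‖ ≤ (s : ℝ) ^ k := by
    filter_upwards [hev2] with k hk
    have h1 : ‖(B ^ k) i j‖₊ ≤ ‖B ^ k‖₊ := schur_entry_nnnorm_le _ i j
    have h2 : (‖B ^ k‖₊ : ENNReal) ≤ ((s ^ k : NNReal) : ENNReal) := by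
      rw [ENNReal.coe_pow, hs, ENNReal.coe_toNNReal hrtop]; exact hk
    have h3 : ‖B ^ k‖₊ ≤ s ^ k := ENNReal.coe_le_coe.mp h2
    calc ‖(B ^ k) i j‖ = ((‖(B ^ k) i j‖₊ : ℝ)) := rfl
      _ ≤ (‖B ^ k‖₊ : ℝ) := by exact_mod_cast h1
      _ ≤ ((s ^ k : NNReal) : ℝ) := by exact_mod_cast h3
      _ = (s : ℝ) ^ k := by push_cast; ring
  have hgeo : Tendsto (fun k : ℕ => (s : ℝ) ^ k) atTop (nhds 0) :=
    tendsto_pow_atTop_nhds_zero_of_lt_one s.coe_nonneg hs1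
  have : Tendsto (fun k : ℕ => ‖(B ^ k) i j‖) atTop (nhds 0) :=
    squeeze_zero' (Eventually.of_forall fun k => norm_nonneg _) hnorm hgeo
  exact tendsto_zero_iff_norm_tendsto_zero.mpr this

end Aux

private lemma schur_real_pow_tendsto {n : ℕ} (A : Matrix (Fin n) (Fin n) ℝ)
    (hA : ∀ μ ∈ spectrum ℂ (A.map (Complex.ofReal ·)), ‖μ‖ < 1) :
    Tendsto (fun k : ℕ => A ^ k) atTop (nhds 0) := by
  apply tendsto_pi_nhds.2
  intro i
  rw [tendsto_pi_nhds]
  intro j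
  set B : Matrix (Fin n) (Fin n) ℂ := A.map (Complex.ofReal ·) with hB
  have hBpow : ∀ k : ℕ, B ^ k = (A ^ k).map (Complex.ofReal ·) :=
    fun k => (map_pow Complex.ofRealHom.mapMatrix A k).symm
  have hentry := schur_pow_entry_tendsto B hA i j
  have hre : Tendsto (fun k : ℕ => ((B ^ k) i j).re) atTop (nhds 0) := by
    have := (Complex.continuous_re.tendsto 0).comp hentry
    simpa [Function.comp_def] using this
  have heq : ∀ k : ℕ, (A ^ k) i j = ((B ^ k) i j).re := by
    intro k
    rw [hBpow k]
    simp [Matrix.map_apply]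
  simpa [heq] using hre

/-- If `A` is Schur stable and `S⋆` solves the discrete Lyapunov equation
`A Σ Aᵀ − Σ + Q = 0`, then for every initial matrix `Σ₀` the iteration
`Σ_{k+1} = A Σ_k Aᵀ + Q` converges to `S⋆`. -/
theorem lyapunov_iteration_tendsto {n : ℕ}
    (A Q Sstar : Matrix (Fin n) (Fin n) ℝ) (hA : IsSchurStable A)
    (hStar : A * Sstar * Aᵀ - Sstar + Q = 0) :
    ∀ (S0 : Matrix (Fin n) (Fin n) ℝ) (f : ℕ → Matrix (Fin n) (Fin n) ℝ),
      f 0 = S0 → (∀ k, f (k + 1) = A * f k * Aᵀ + Q) →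
      Tendsto f atTop (nhds Sstar) := by
  intro S0 f hf0 hfs
  have hS : A * Sstar * Aᵀ + Q = Sstar := by
    rw [sub_add_eq_add_sub, sub_eq_zero] at hStar
    exact hStar
  have hform : ∀ k, f k = A ^ k * (S0 - Sstar) * (A ^ k)ᵀ + Sstar := by
    intro k
    induction k with
    | zero => simp [hf0]
    | succ k ih =>
      rw [hfs k, ih]
      have expand : A * (A ^ k * (S0 - Sstar) * (A ^ k)ᵀ + Sstar) * Aᵀ + Q =
          A ^ (k + 1) * (S0 - Sstar) * (A ^ (k + 1))ᵀ + (A * Sstar * Aᵀ + Q) := by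
        rw [Matrix.transpose_pow, Matrix.transpose_pow, pow_succ' A, pow_succ Aᵀ]
        noncomm_ring
      rw [expand, hS]
  have hpow := schur_real_pow_tendsto A hA
  have hcont : Continuous fun X : Matrix (Fin n) (Fin n) ℝ =>
      X * (S0 - Sstar) * Xᵀ + Sstar :=
    ((continuous_id.matrix_mul continuous_const).matrix_mul
      continuous_id.matrix_transpose).add continuous_const
  have hlim := (hcont.tendsto 0).comp hpow
  simp only [Function.comp_def] at hlim
  have h0 : (0 : Matrix (Fin n) (Fin n) ℝ) * (S0 - Sstar) * (0 : Matrix (Fin n) (Fin n) ℝ)ᵀ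
      + Sstar = Sstar := by simp
  rw [h0] at hlim
  convert hlim using 1
  funext k
  exact hform k
end
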